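/- Let N ≥ 2 and ζ₁ < ζ₂ < ⋯ < ζ_{N+1} be real numbers; for j = 1,…,N set Ω_j = {x ∈ ℝ² : ζ_j < x₂ < ζ_{j+1}}. Let G : ℝ² × ℝ² → ℂ be a kernel, let f : ℝ² → ℂ be supported in {x : ζ₁ < x₂ < ζ_{N+1}}, and set f_j = f·1_{Ω_j}. Let f̄_j⁺ (j = 1,…,N−1) and f̄_j⁻ (j = 2,…,N) be as follows: f̄_1⁺ = f_1, f̄_N⁻ = f_N, each f̄_j^± is supported in the closure of Ω_j, for every j = 1,…,N−2 and every x with x₂ > ζ_{j+2} one has ∫_{Ω_j} f̄_j⁺(y)G(x,y)dy = ∫_{Ω_{j+1}} (f̄_{j+1}⁺(y) − f_{j+1}(y))G(x,y)dy, and for every j = 3,…,N and every x with x₂ < ζ_{j−1} one has ∫_{Ω_j} f̄_j⁻(y)G(x,y)dy = ∫_{Ω_{j−1}} (f̄_{j−1}⁻(y) − f_{j−1}(y))G(x,y)dy. Assume all functions y ↦ f̄_j^±(y)G(x,y) and y ↦ f(y)G(x,y) occurring below are Bochner integrable. Define ũ(x) = −∫_{ℝ²} f(y)G(x,y)dy;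 u_i⁺(x) = ∫_{ℝ²}(f̄_i⁺(y) + f_{i+1}(y))G(x,y)dy for i = 1,…,N−1; u_i⁻(x) = ∫_{Ω_i} f̄_i⁻(y)G(x,y)dy for i = 3,…,N; u_2⁻(x) = ∫_{ℝ²}(f̄_2⁻(y) + f_1(y))G(x,y)dy; and u_0⁺ ≡ 0, u_{N+1}⁻ ≡ 0. Then for every i = 1,…,N and every x ∈ Ω_i: ũ(x) = −( u_{i−1}⁺(x) + u_{i+1}⁻(x) ). -/

import Mathlib

open MeasureTheory

/-- The horizontal layer `Ω_j = {x ∈ ℝ² : ζ_j < x₂ < ζ_{j+1}}`. -/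
def layer (ζ : ℕ → ℝ) (j : ℕ) : Set (ℝ × ℝ) := {x : ℝ × ℝ | ζ j < x.2 ∧ x.2 < ζ (j + 1)}

/-- The piece `f_j = f·1_{Ω_j}` of the source `f`. -/
noncomputable def piece (ζ : ℕ → ℝ) (f : ℝ × ℝ → ℂ) (j : ℕ) : ℝ × ℝ → ℂ :=
  (layer ζ j).indicator f

lemma layer_measurableSet (ζ : ℕ → ℝ) (j : ℕ) : MeasurableSet (layer ζ j) := by
  have : layer ζ j = Prod.snd ⁻¹' Set.Ioo (ζ j) (ζ (j + 1)) := rfl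
  rw [this]
  exact measurableSet_Ioo.preimage measurable_snd

lemma ae_snd_ne (c : ℝ) : ∀ᵐ y : ℝ × ℝ, y.2 ≠ c := by
  have h : {p : ℝ × ℝ | p.2 = c} = (Set.univ : Set ℝ) ×ˢ ({c} : Set ℝ) := by
    ext p
    simp only [Set.mem_setOf_eq, Set.mem_prod, Set.mem_univ, Set.mem_singleton_iff, true_and]
  rw [MeasureTheory.ae_iff]
  have h2 : {y : ℝ × ℝ | ¬ y.2 ≠ c} = (Set.univ : Set ℝ) ×ˢ ({c} : Set ℝ) := by
    rw [← h]; ext p; simp only [Set.mem_setOf_eq, ne_eq, not_not]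
  rw [h2, MeasureTheory.Measure.volume_eq_prod, MeasureTheory.Measure.prod_prod]
  simp
/-- Theorem 2.3 of the paper: exactness of the PSTDDM in the whole space.  In each layer `Ω_i`
the PML solution `ũ` is recovered as `ũ = −(u_{i−1}⁺ + u_{i+1}⁻)`. -/
theorem stmt_5
    (N : ℕ) (hN : 2 ≤ N)
    (ζ : ℕ → ℝ) (hζ : ∀ j, 1 ≤ j → j ≤ N → ζ j < ζ (j + 1))
    (G : ℝ × ℝ → ℝ × ℝ → ℂ)
    (f : ℝ × ℝ → ℂ)
    (hf_supp : Function.support f ⊆ {x : ℝ × ℝ | ζ 1 < x.2 ∧ x.2 < ζ (N + 1)})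
    (fbarp fbarm : ℕ → ℝ × ℝ → ℂ)
    (hfbarp1 : fbarp 1 = piece ζ f 1)
    (hfbarmN : fbarm N = piece ζ f N)
    (hfbarp_supp : ∀ j, 1 ≤ j → j ≤ N - 1 →
      Function.support (fbarp j) ⊆ closure (layer ζ j))
    (hfbarm_supp : ∀ j, 2 ≤ j → j ≤ N →
      Function.support (fbarm j) ⊆ closure (layer ζ j))
    (htransferp : ∀ j, 1 ≤ j → j ≤ N - 2 → ∀ x : ℝ × ℝ, ζ (j + 2) < x.2 →
      ∫ y in layer ζ j, fbarp j y * G x y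
        = ∫ y in layer ζ (j + 1), (fbarp (j + 1) y - piece ζ f (j + 1) y) * G x y)
    (htransferm : ∀ j, 3 ≤ j → j ≤ N → ∀ x : ℝ × ℝ, x.2 < ζ (j - 1) →
      ∫ y in layer ζ j, fbarm j y * G x y
        = ∫ y in layer ζ (j - 1), (fbarm (j - 1) y - piece ζ f (j - 1) y) * G x y)
    (hint_fbarp : ∀ j, 1 ≤ j → j ≤ N - 1 → ∀ x : ℝ × ℝ,
      Integrable (fun y => fbarp j y * G x y))
    (hint_fbarm : ∀ j, 2 ≤ j → j ≤ N → ∀ x : ℝ × ℝ,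
      Integrable (fun y => fbarm j y * G x y))
    (hint_f : ∀ x : ℝ × ℝ, Integrable (fun y => f y * G x y))
    (utilde : ℝ × ℝ → ℂ)
    (hutilde : ∀ x : ℝ × ℝ, utilde x = -∫ y : ℝ × ℝ, f y * G x y)
    (up um : ℕ → ℝ × ℝ → ℂ)
    (hup0 : ∀ x : ℝ × ℝ, up 0 x = 0)
    (hup : ∀ i, 1 ≤ i → i ≤ N - 1 → ∀ x : ℝ × ℝ,
      up i x = ∫ y : ℝ × ℝ, (fbarp i y + piece ζ f (i + 1) y) * G x y)
    (humN1 : ∀ x : ℝ × ℝ, um (N + 1) x = 0)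
    (hum : ∀ i, 3 ≤ i → i ≤ N → ∀ x : ℝ × ℝ,
      um i x = ∫ y in layer ζ i, fbarm i y * G x y)
    (hum2 : ∀ x : ℝ × ℝ,
      um 2 x = ∫ y : ℝ × ℝ, (fbarm 2 y + piece ζ f 1 y) * G x y) :
    ∀ i, 1 ≤ i → i ≤ N → ∀ x ∈ layer ζ i,
      utilde x = -(up (i - 1) x + um (i + 1) x) := by

  classical
  -- monotonicity of ζ
  have hmono : ∀ a b, 1 ≤ a → a ≤ b → b ≤ N + 1 → ζ a ≤ ζ b := by
    intro a b ha hab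
    induction b, hab using Nat.le_induction with
    | base => intro _; exact le_refl _
    | succ b hb ih =>
      intro hbN
      exact le_trans (ih (by omega)) (le_of_lt (hζ b (by omega) (by omega)))
  have hmeas : ∀ k, MeasurableSet (layer ζ k) := fun k => layer_measurableSet ζ k
  have hpiece_fun : ∀ k (x : ℝ × ℝ), (fun y => piece ζ f k y * G x y)
      = (layer ζ k).indicator (fun y => f y * G x y) := by
    intro k x; funext y
    by_cases hy : y ∈ layer ζ k <;>
      simp [piece, Set.indicator_of_mem, Set.indicator_of_notMem, hy]
  have hint_piece : ∀ k (x : ℝ × ℝ), Integrable (fun y => piece ζ f k y * G x y) := by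
    intro k x; rw [hpiece_fun]; exact (hint_f x).indicator (hmeas k)
  have hI_set : ∀ k (x : ℝ × ℝ),
      ∫ y in layer ζ k, piece ζ f k y * G x y = ∫ y, piece ζ f k y * G x y := by
    intro k x
    conv_rhs => rw [hpiece_fun, MeasureTheory.integral_indicator (hmeas k)]
    exact setIntegral_congr_fun (hmeas k)
      (fun y hy => by simp [piece, Set.indicator_of_mem hy])
  have hae : ∀ᵐ y : ℝ × ℝ, ∀ k : ℕ, y.2 ≠ ζ k := by
    rw [MeasureTheory.ae_all_iff]; exact fun k => ae_snd_ne (ζ k)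
  -- splitting the total integral
  have hsplit : ∀ x : ℝ × ℝ,
      ∫ y, f y * G x y = ∑ k ∈ Finset.Ioc 0 N, ∫ y, piece ζ f k y * G x y := by
    intro x
    rw [← MeasureTheory.integral_finset_sum _ (fun k _ => hint_piece k x)]
    apply integral_congr_ae
    filter_upwards [hae] with y hy
    by_cases hfy : f y = 0
    · simp [piece, Set.indicator_apply, hfy]
    · have hy1 := hf_supp (show y ∈ Function.support f from hfy)
      have hPj : ζ (Nat.findGreatest (fun k => ζ k < y.2) N) < y.2 :=
        Nat.findGreatest_spec (P := fun k => ζ k < y.2) (show 1 ≤ N by omega) hy1.1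
      set j := Nat.findGreatest (fun k => ζ k < y.2) N with hjdef
      have hj1 : 1 ≤ j := Nat.le_findGreatest (by omega) hy1.1
      have hjN : j ≤ N := Nat.findGreatest_le N
      have hyj2 : y.2 < ζ (j + 1) := by
        rcases eq_or_lt_of_le hjN with hEq | hlt'
        · rw [hEq]; exact hy1.2
        · have hng := Nat.findGreatest_is_greatest (show j < j + 1 by omega)
            (show j + 1 ≤ N by omega)
          exact lt_of_le_of_ne (not_lt.1 hng) (hy (j + 1))
      have hmemj : y ∈ layer ζ j := ⟨hPj, hyj2⟩
      have hzero : ∀ b ∈ Finset.Ioc 0 N, b ≠ j → piece ζ f b y * G x y = 0 := by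
        intro b hb hbj
        rw [Finset.mem_Ioc] at hb
        have hnb : y ∉ layer ζ b := by
          intro hmem'
          rcases lt_or_gt_of_ne hbj with h | h
          · have hle : ζ (b + 1) ≤ ζ j := hmono (b + 1) j (by omega) (by omega) (by omega)
            have := hmem'.2; linarith
          · have hle : ζ (j + 1) ≤ ζ b := hmono (j + 1) b (by omega) (by omega) (by omega)
            have := hmem'.1; linarith
        simp [piece, Set.indicator_of_notMem hnb]
      rw [Finset.sum_eq_single_of_mem j (Finset.mem_Ioc.mpr ⟨by omega, hjN⟩) hzero]
      simp [piece, Set.indicator_of_mem hmemj]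
  -- removing the layer restriction for functions supported in the closed layer
  have hL2 : ∀ (h : ℝ × ℝ → ℂ) (j : ℕ) (x : ℝ × ℝ),
      Function.support h ⊆ closure (layer ζ j) →
      ∫ y in layer ζ j, h y * G x y = ∫ y, h y * G x y := by
    intro h j x hsupp
    have hcl : closure (layer ζ j) ⊆ {y : ℝ × ℝ | ζ j ≤ y.2 ∧ y.2 ≤ ζ (j + 1)} := by
      apply closure_minimal
      · intro y hy; exact ⟨le_of_lt hy.1, le_of_lt hy.2⟩
      · have he : {y : ℝ × ℝ | ζ j ≤ y.2 ∧ y.2 ≤ ζ (j + 1)}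
            = Prod.snd ⁻¹' Set.Icc (ζ j) (ζ (j + 1)) := rfl
        rw [he]; exact isClosed_Icc.preimage continuous_snd
    rw [← MeasureTheory.integral_indicator (hmeas j)]
    apply integral_congr_ae
    filter_upwards [hae] with y hy
    by_cases hmem : y ∈ layer ζ j
    · rw [Set.indicator_of_mem hmem]
    · rw [Set.indicator_of_notMem hmem]
      have hz : h y = 0 := by
        by_contra h0
        have hin := hcl (hsupp h0)
        exact hmem ⟨lt_of_le_of_ne hin.1 (Ne.symm (hy j)), lt_of_le_of_ne hin.2 (hy (j + 1))⟩
      rw [hz, zero_mul]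
  -- upward chain
  have hup_chain : ∀ j, 1 ≤ j → j ≤ N - 1 → ∀ x : ℝ × ℝ, ζ (j + 1) < x.2 →
      ∫ y in layer ζ j, fbarp j y * G x y
        = ∑ k ∈ Finset.Ioc 0 j, ∫ y, piece ζ f k y * G x y := by
    intro j
    induction j with
    | zero => intro h1; exact absurd h1 (by omega)
    | succ j ih =>
      intro _ hjN x hx2
      by_cases hj0 : j = 0
      · subst hj0
        rw [hfbarp1, hI_set 1 x]
        have he : Finset.Ioc 0 1 = {1} := rfl
        rw [he, Finset.sum_singleton]
      · have hsub : Integrable (fun y => (fbarp (j + 1) y - piece ζ f (j + 1) y) * G x y) := by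
          simpa [sub_mul, Pi.sub_def] using
            (hint_fbarp (j + 1) (by omega) (by omega) x).sub (hint_piece (j + 1) x)
        have h1 : (∫ y in layer ζ (j + 1), fbarp (j + 1) y * G x y)
            = (∫ y in layer ζ (j + 1), (fbarp (j + 1) y - piece ζ f (j + 1) y) * G x y)
              + ∫ y in layer ζ (j + 1), piece ζ f (j + 1) y * G x y := by
          rw [← MeasureTheory.integral_add hsub.integrableOn (hint_piece (j + 1) x).integrableOn]
          exact setIntegral_congr_fun (hmeas _) (fun y _ => by ring)
        have hxj : ζ (j + 1) < x.2 :=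
          lt_trans (hζ (j + 1) (by omega) (by omega)) hx2
        rw [h1, ← htransferp j (by omega) (by omega) x hx2,
          ih (by omega) (by omega) x hxj, hI_set (j + 1) x,
          Finset.sum_Ioc_succ_top (by omega)]
  -- downward chain
  have hdown_chain : ∀ d j, 2 ≤ j → j ≤ N → N - j = d → ∀ x : ℝ × ℝ, x.2 < ζ j →
      ∫ y in layer ζ j, fbarm j y * G x y
        = ∑ k ∈ Finset.Ioc (j - 1) N, ∫ y, piece ζ f k y * G x y := by
    intro d
    induction d with
    | zero =>
      intro j hj2 hjN hd x hx2
      have hjN' : j = N := by omega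
      rw [hjN', hfbarmN, hI_set N x]
      have he : Finset.Ioc (N - 1) N = {N} := by
        ext k; simp only [Finset.mem_Ioc, Finset.mem_singleton]; omega
      rw [he, Finset.sum_singleton]
    | succ d ih =>
      intro j hj2 hjN hd x hx2
      have ht := htransferm (j + 1) (by omega) (by omega) x (by simpa using hx2)
      simp only [Nat.add_sub_cancel] at ht
      have hIH := ih (j + 1) (by omega) (by omega) (by omega) x
        (lt_trans hx2 (hζ j (by omega) (by omega)))
      have hsub : Integrable (fun y => (fbarm j y - piece ζ f j y) * G x y) := by
        simpa [sub_mul, Pi.sub_def] using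
          (hint_fbarm j (by omega) (by omega) x).sub (hint_piece j x)
      have h1 : (∫ y in layer ζ j, fbarm j y * G x y)
          = (∫ y in layer ζ j, (fbarm j y - piece ζ f j y) * G x y)
            + ∫ y in layer ζ j, piece ζ f j y * G x y := by
        rw [← MeasureTheory.integral_add hsub.integrableOn (hint_piece j x).integrableOn]
        exact setIntegral_congr_fun (hmeas _) (fun y _ => by ring)
      rw [h1, ← ht, hIH, hI_set j x]
      simp only [Nat.add_sub_cancel]
      have he : Finset.Ioc (j - 1) N = insert j (Finset.Ioc j N) := by
        ext k; simp only [Finset.mem_Ioc, Finset.mem_insert]; omega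
      rw [he, Finset.sum_insert (by intro hmem; rw [Finset.mem_Ioc] at hmem; omega)]
      ring
  -- conclusion
  intro i hi1 hiN x hx
  rw [hutilde, hsplit x]
  by_cases hieq1 : i = 1
  · subst hieq1
    have e0 : (1 : ℕ) - 1 = 0 := rfl
    have e2 : (1 : ℕ) + 1 = 2 := rfl
    rw [e0, e2, hup0, hum2 x]
    have hadd : ∫ y, (fbarm 2 y + piece ζ f 1 y) * G x y
        = (∫ y, fbarm 2 y * G x y) + ∫ y, piece ζ f 1 y * G x y := by
      rw [← MeasureTheory.integral_add (hint_fbarm 2 le_rfl hN x) (hint_piece 1 x)]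
      congr 1; funext y; ring
    have hx2 : x.2 < ζ 2 := hx.2
    rw [hadd, ← hL2 (fbarm 2) 2 x (hfbarm_supp 2 le_rfl hN),
      hdown_chain (N - 2) 2 le_rfl hN rfl x hx2]
    have he : Finset.Ioc 0 N = insert 1 (Finset.Ioc (2 - 1) N) := by
      ext k; simp only [Finset.mem_Ioc, Finset.mem_insert]; omega
    rw [he, Finset.sum_insert (by intro hmem; rw [Finset.mem_Ioc] at hmem; omega)]
    ring
  · have hi2 : 2 ≤ i := by omega
    have hii : i - 1 + 1 = i := by omega
    have hup_val : up (i - 1) x = ∑ k ∈ Finset.Ioc 0 i, ∫ y, piece ζ f k y * G x y := by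
      rw [hup (i - 1) (by omega) (by omega) x, hii]
      have hadd : ∫ y, (fbarp (i - 1) y + piece ζ f i y) * G x y
          = (∫ y, fbarp (i - 1) y * G x y) + ∫ y, piece ζ f i y * G x y := by
        rw [← MeasureTheory.integral_add (hint_fbarp (i - 1) (by omega) (by omega) x)
          (hint_piece i x)]
        congr 1; funext y; ring
      have hx1 : ζ (i - 1 + 1) < x.2 := by rw [hii]; exact hx.1
      rw [hadd, ← hL2 (fbarp (i - 1)) (i - 1) x (hfbarp_supp (i - 1) (by omega) (by omega)),
        hup_chain (i - 1) (by omega) (by omega) x hx1]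
      have he : Finset.Ioc 0 i = insert i (Finset.Ioc 0 (i - 1)) := by
        ext k; simp only [Finset.mem_Ioc, Finset.mem_insert]; omega
      rw [he, Finset.sum_insert (by intro hmem; rw [Finset.mem_Ioc] at hmem; omega)]
      ring
    have hum_val : um (i + 1) x = ∑ k ∈ Finset.Ioc i N, ∫ y, piece ζ f k y * G x y := by
      by_cases hiN' : i = N
      · subst hiN'
        rw [humN1]
        simp
      · rw [hum (i + 1) (by omega) (by omega) x,
          hdown_chain (N - (i + 1)) (i + 1) (by omega) (by omega) rfl x hx.2]
        simp only [Nat.add_sub_cancel]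
    rw [hup_val, hum_val, Finset.sum_Ioc_consecutive _ (by omega : 0 ≤ i) hiN]
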